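/- Let G be a compact metrizable abelian group with Haar probability measure m, and f, g : G → [0,1] be m-measurable. Set C₀ = {x : f(x) > 0} and D₀ = {x : g(x) > 0}. Then there exist Borel sets C ⊆ C₀ and D ⊆ D₀ with m(C) = m(C₀), m(D) = m(D₀), such that C + D is Borel and C + D ⊆ {x ∈ G : (f * g)(x) > 0}. -/

import Mathlib

open MeasureTheory Pointwise Filter ENNReal

set_option linter.unusedSectionVars false

section Aux

variable {G : Type*} [AddCommGroup G] [TopologicalSpace G] [IsTopologicalAddGroup G]
    [CompactSpace G] [T2Space G] [TopologicalSpace.MetrizableSpace G]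
    [MeasurableSpace G] [BorelSpace G]

/-- translation continuity in measure at 0 -/
lemma aux_translate (m : Measure G) [m.IsAddHaarMeasure] [IsProbabilityMeasure m]
    {A : Set G} (hA : MeasurableSet A) {ε : ℝ≥0∞} (hε : ε ≠ 0) :
    ∃ W : Set G, IsOpen W ∧ (0:G) ∈ W ∧ ∀ w ∈ W, m {x | x ∈ A ∧ x + w ∉ A} ≤ ε := by
  have hε2 : ε / 2 ≠ 0 := by
    simp [ENNReal.div_eq_zero_iff, hε]
  obtain ⟨O, hAO, hO, hOm⟩ := Set.exists_isOpen_lt_add A (measure_ne_top m A) hε2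
  obtain ⟨K, hKA, hK, hKm⟩ := hA.exists_isClosed_lt_add (measure_ne_top m A) hε2
  obtain ⟨V, hV, hKV⟩ :=
    compact_open_separated_add_right (hK.isCompact) hO (hKA.trans hAO)
  obtain ⟨W, hWV, hWopen, hW0⟩ := mem_nhds_iff.mp hV
  refine ⟨W, hWopen, hW0, fun w hw => ?_⟩
  have hsub : {x | x ∈ A ∧ x + w ∉ A} ⊆ (A \ K) ∪ ((fun x => w + x) ⁻¹' (O \ A)) := by
    rintro x ⟨hxA, hxw⟩
    by_cases hxK : x ∈ K
    · right
      have : x + w ∈ O := hKV (Set.add_mem_add hxK (hWV hw))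
      exact Set.mem_preimage.mpr (by rw [add_comm]; exact ⟨this, hxw⟩)
    · exact Or.inl ⟨hxA, hxK⟩
  calc m {x | x ∈ A ∧ x + w ∉ A}
      ≤ m (A \ K) + m ((fun x => w + x) ⁻¹' (O \ A)) :=
        (measure_mono hsub).trans (measure_union_le _ _)
    _ = m (A \ K) + m (O \ A) := by rw [measure_preimage_add]
    _ ≤ ε / 2 + ε / 2 := by
        gcongr
        · exact (measure_diff_lt_of_lt_add hK.measurableSet.nullMeasurableSet hKA (measure_ne_top m K) hKm).le
        · exact (measure_diff_lt_of_lt_add hA.nullMeasurableSet hAO (measure_ne_top m A) hOm).le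
    _ = ε := ENNReal.add_halves ε

/-- The set of points of `A` at which the relative measure of
`{v ∈ V | k (x, v) ∉ A}` is at least half of `m V` is small. -/
lemma aux_bad (m : Measure G) [m.IsAddHaarMeasure] [IsProbabilityMeasure m]
    {A V : Set G} (hA : MeasurableSet A) (hV : MeasurableSet V)
    (k : G × G → G) (hk : Measurable k) {ε : ℝ≥0∞}
    (hb : ∀ v ∈ V, m {x | x ∈ A ∧ k (x, v) ∉ A} ≤ ε) :
    Measurable (fun x => m {v | v ∈ V ∧ k (x, v) ∉ A}) ∧
      m V / 2 * m (A ∩ {x | m V / 2 ≤ m {v | v ∈ V ∧ k (x, v) ∉ A}}) ≤ ε * m V := by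
  set T : Set (G × G) := {p | p.2 ∈ V ∧ k p ∉ A} with hT
  have hTm : MeasurableSet T := by
    exact (measurable_snd hV).inter (hk (hA.compl))
  have hfib : ∀ x, Prod.mk x ⁻¹' T = {v | v ∈ V ∧ k (x, v) ∉ A} := fun x => rfl
  have hmeas : Measurable (fun x => m {v | v ∈ V ∧ k (x, v) ∉ A}) := by
    simpa [hfib] using measurable_measure_prodMk_left (ν := m) hTm
  refine ⟨hmeas, ?_⟩
  -- integral of the bad-mass over A
  have h1 : ∫⁻ x, m {v | v ∈ V ∧ k (x, v) ∉ A} ∂(m.restrict A)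
      = ((m.restrict A).prod m) T := by
    rw [Measure.prod_apply hTm]
    simp_rw [hfib]
  have h2 : ((m.restrict A).prod m) T ≤ ε * m V := by
    rw [Measure.prod_apply_symm hTm]
    have hpt : ∀ v : G, (m.restrict A) ((fun x => (x, v)) ⁻¹' T)
        ≤ V.indicator (fun _ => ε) v := by
      intro v
      by_cases hv : v ∈ V
      · have : ((fun x => (x, v)) ⁻¹' T) = {x | k (x, v) ∉ A} := by
          ext x; simp [hT, hv]
        have hmx : MeasurableSet {x | k (x, v) ∉ A} := by
          have : Measurable (fun x => k (x, v)) := hk.comp (measurable_id.prodMk measurable_const)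
          exact this hA.compl
        rw [this, Measure.restrict_apply hmx, Set.indicator_of_mem hv]
        refine le_trans (le_of_eq ?_) (hb v hv)
        congr 1
        ext x; simp [Set.mem_setOf_eq, and_comm]
      · have : ((fun x => (x, v)) ⁻¹' T) = ∅ := by
          ext x; simp [hT, hv]
        simp [this, hv]
    calc ∫⁻ v, (m.restrict A) ((fun x => (x, v)) ⁻¹' T) ∂m
        ≤ ∫⁻ v, V.indicator (fun _ => ε) v ∂m := lintegral_mono hpt
      _ = ε * m V := by rw [lintegral_indicator_const hV]
  have markov := mul_meas_ge_le_lintegral₀ (μ := m.restrict A)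
    (hmeas.aemeasurable) (m V / 2)
  have hrs : (m.restrict A) {x | m V / 2 ≤ m {v | v ∈ V ∧ k (x, v) ∉ A}}
      = m (A ∩ {x | m V / 2 ≤ m {v | v ∈ V ∧ k (x, v) ∉ A}}) := by
    rw [Measure.restrict_apply (measurableSet_le measurable_const hmeas), Set.inter_comm]
  rw [hrs] at markov
  exact markov.trans (h1 ▸ h2)

lemma aux_sigma (m : Measure G) [m.IsAddHaarMeasure] [IsProbabilityMeasure m]
    {A : Set G} (hA : MeasurableSet A) :
    ∃ K : ℕ → Set G, (∀ n, IsCompact (K n)) ∧ (∀ n, K n ⊆ A) ∧ m (⋃ n, K n) = m A := by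
  have hch : ∀ n : ℕ, ∃ K, K ⊆ A ∧ IsClosed K ∧ m A < m K + (↑(n+1))⁻¹ := by
    intro n
    exact hA.exists_isClosed_lt_add (measure_ne_top m A)
      (by simp)
  choose K hKA hKcl hKm using hch
  refine ⟨K, fun n => (hKcl n).isCompact, hKA, le_antisymm
    (measure_mono (Set.iUnion_subset hKA)) ?_⟩
  refine ENNReal.le_of_forall_pos_le_add fun ε hε _ => ?_
  obtain ⟨n, hn⟩ := ENNReal.exists_inv_nat_lt (a := (ε : ℝ≥0∞)) (by exact_mod_cast hε.ne')
  have h1 : m A ≤ m (K n) + (↑(n+1))⁻¹ := (hKm n).le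
  have h2 : ((n+1 : ℕ) : ℝ≥0∞)⁻¹ ≤ (↑n)⁻¹ := by
    gcongr
    · exact_mod_cast le_refl _ |>.trans (by exact_mod_cast Nat.le_succ n)
  have h3 : m (K n) ≤ m (⋃ i, K i) := measure_mono (Set.subset_iUnion K n)
  have h4 : ((n+1 : ℕ) : ℝ≥0∞)⁻¹ ≤ (ε : ℝ≥0∞) := h2.trans hn.le
  exact h1.trans (add_le_add h3 h4)

lemma aux_pos (m : Measure G) [m.IsAddHaarMeasure] [IsProbabilityMeasure m]
    {f g : G → ℝ} (hf : Measurable f) (hg : Measurable g)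
    (hf01 : ∀ x, f x ∈ Set.Icc (0 : ℝ) 1) (hg01 : ∀ x, g x ∈ Set.Icc (0 : ℝ) 1)
    {c d : G} (hpos : 0 < m {v | 0 < f (c + v) ∧ 0 < g (d - v)}) :
    0 < ∫ t, f t * g (c + d - t) ∂m := by
  set φ : G → ℝ := fun t => f t * g (c + d - t) with hφ
  have hφm : Measurable φ := hf.mul (hg.comp (measurable_const.sub measurable_id))
  have hφ0 : ∀ t, 0 ≤ φ t := fun t => mul_nonneg (hf01 t).1 (hg01 _).1
  have hint : Integrable φ m := by
    refine Integrable.mono' (integrable_const (1 : ℝ)) hφm.aestronglyMeasurable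
      (Filter.Eventually.of_forall fun t => ?_)
    have h1 := (hf01 t).2
    have h2 := (hg01 (c + d - t)).2
    have := mul_le_one₀ h1 (hg01 _).1 h2
    rw [Real.norm_eq_abs, abs_of_nonneg (hφ0 t)]
    exact this
  rw [integral_pos_iff_support_of_nonneg hφ0 hint]
  have hsub : (fun v => c + v) ⁻¹' (Function.support φ) ⊇
      {v | 0 < f (c + v) ∧ 0 < g (d - v)} := by
    rintro v ⟨h1, h2⟩
    have he : c + d - (c + v) = d - v := by abel
    simp only [Set.mem_preimage, Function.mem_support, hφ]
    rw [he]
    exact ne_of_gt (mul_pos h1 h2)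
  calc (0:ℝ≥0∞) < m {v | 0 < f (c + v) ∧ 0 < g (d - v)} := hpos
    _ ≤ m ((fun v => c + v) ⁻¹' (Function.support φ)) := measure_mono hsub
    _ = m (Function.support φ) := measure_preimage_add m c _

end Aux

/-- in a compact metrizable abelian group with Haar probability measure `m`,
the supports of `f, g : G → [0,1]` contain Borel sets `C, D` of full measure such that
`C + D` is Borel and contained in the support of the convolution `f * g`. -/
theorem convolution_to_sumset
    {G : Type*} [AddCommGroup G] [TopologicalSpace G] [IsTopologicalAddGroup G]
    [CompactSpace G] [T2Space G] [TopologicalSpace.MetrizableSpace G]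
    [MeasurableSpace G] [BorelSpace G]
    (m : Measure G) [m.IsAddHaarMeasure] [IsProbabilityMeasure m]
    (f g : G → ℝ) (hf : Measurable f) (hg : Measurable g)
    (hf01 : ∀ x, f x ∈ Set.Icc (0 : ℝ) 1) (hg01 : ∀ x, g x ∈ Set.Icc (0 : ℝ) 1) :
    ∃ C D : Set G, MeasurableSet C ∧ MeasurableSet D ∧
      C ⊆ {x | 0 < f x} ∧ D ⊆ {x | 0 < g x} ∧
      m C = m {x | 0 < f x} ∧ m D = m {x | 0 < g x} ∧
      MeasurableSet (C + D) ∧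
      C + D ⊆ {x | 0 < ∫ t, f t * g (x - t) ∂m} := by
  classical
  set C₀ : Set G := {x | 0 < f x} with hC₀def
  set D₀ : Set G := {x | 0 < g x} with hD₀def
  have hC₀ : MeasurableSet C₀ := measurableSet_lt measurable_const hf
  have hD₀ : MeasurableSet D₀ := measurableSet_lt measurable_const hg
  have hpow : ∀ j : ℕ, ((2:ℝ≥0∞)⁻¹) ^ (j+1) ≠ 0 := by
    intro j
    simp [pow_ne_zero, ENNReal.inv_ne_zero]
  -- choose the neighborhoods
  choose WC hWCo hWC0 hWCb using fun j : ℕ => aux_translate m hC₀ (hpow j)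
  choose WD hWDo hWD0 hWDb using fun j : ℕ => aux_translate m hD₀ (hpow j)
  set V : ℕ → Set G := fun j => WC j ∩ ((fun v => -v) ⁻¹' (WD j)) with hVdef
  have hVo : ∀ j, IsOpen (V j) := fun j => (hWCo j).inter ((hWDo j).preimage continuous_neg)
  have hV0 : ∀ j, (0:G) ∈ V j := fun j => ⟨hWC0 j, by simpa using hWD0 j⟩
  have hVm : ∀ j, MeasurableSet (V j) := fun j => (hVo j).measurableSet
  have hVpos : ∀ j, 0 < m (V j) := fun j => (hVo j).measure_pos m ⟨0, hV0 j⟩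
  have hVfin : ∀ j, m (V j) ≠ ⊤ := fun j => measure_ne_top m _
  have hhalf0 : ∀ j, m (V j) / 2 ≠ 0 := by
    intro j
    simp [ENNReal.div_eq_zero_iff, (hVpos j).ne']
  have hhalffin : ∀ j, m (V j) / 2 ≠ ⊤ := fun j => (ENNReal.half_le_self.trans_lt
    (lt_top_iff_ne_top.mpr (hVfin j))).ne
  -- the two "bad mass" functions
  have hkC : Measurable (fun p : G × G => p.1 + p.2) := measurable_fst.add measurable_snd
  have hkD : Measurable (fun p : G × G => p.1 - p.2) := measurable_fst.sub measurable_snd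
  have hbC : ∀ j, ∀ v ∈ V j, m {x | x ∈ C₀ ∧ x + v ∉ C₀} ≤ (2⁻¹:ℝ≥0∞)^(j+1) :=
    fun j v hv => hWCb j v hv.1
  have hbD : ∀ j, ∀ v ∈ V j, m {x | x ∈ D₀ ∧ x - v ∉ D₀} ≤ (2⁻¹:ℝ≥0∞)^(j+1) := by
    intro j v hv
    have := hWDb j (-v) hv.2
    simpa [sub_eq_add_neg] using this
  have hauxC := fun j => aux_bad m hC₀ (hVm j) (fun p : G × G => p.1 + p.2) hkC (hbC j)
  have hauxD := fun j => aux_bad m hD₀ (hVm j) (fun p : G × G => p.1 - p.2) hkD (hbD j)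
  set hCfun : ℕ → G → ℝ≥0∞ := fun j x => m {v | v ∈ V j ∧ x + v ∉ C₀} with hCfdef
  set hDfun : ℕ → G → ℝ≥0∞ := fun j x => m {v | v ∈ V j ∧ x - v ∉ D₀} with hDfdef
  have hCfm : ∀ j, Measurable (hCfun j) := fun j => (hauxC j).1
  have hDfm : ∀ j, Measurable (hDfun j) := fun j => (hauxD j).1
  -- the bad sets and the measure bound
  set SC : ℕ → Set G := fun j => C₀ ∩ {x | m (V j) / 2 ≤ hCfun j x} with hSCdef
  set SD : ℕ → Set G := fun j => D₀ ∩ {x | m (V j) / 2 ≤ hDfun j x} with hSDdef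
  have hSCm : ∀ j, MeasurableSet (SC j) :=
    fun j => hC₀.inter (measurableSet_le measurable_const (hCfm j))
  have hSDm : ∀ j, MeasurableSet (SD j) :=
    fun j => hD₀.inter (measurableSet_le measurable_const (hDfm j))
  have hmain : ∀ (j : ℕ) (S : Set G),
      m (V j) / 2 * m S ≤ (2⁻¹:ℝ≥0∞)^(j+1) * m (V j) → m S ≤ (2⁻¹:ℝ≥0∞)^j := by
    intro j S h
    have h2 : (2⁻¹:ℝ≥0∞)^(j+1) * m (V j) = m (V j) / 2 * (2⁻¹:ℝ≥0∞)^j := by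
      rw [pow_succ]
      have : m (V j) = m (V j) / 2 * 2 := (ENNReal.div_mul_cancel two_ne_zero ofNat_ne_top).symm
      calc (2⁻¹:ℝ≥0∞)^j * 2⁻¹ * m (V j) = (2⁻¹:ℝ≥0∞)^j * 2⁻¹ * (m (V j) / 2 * 2) := by
            rw [← this]
        _ = m (V j) / 2 * (2⁻¹:ℝ≥0∞)^j * (2⁻¹ * 2) := by ring
        _ = m (V j) / 2 * (2⁻¹:ℝ≥0∞)^j := by
            rw [ENNReal.inv_mul_cancel two_ne_zero ofNat_ne_top, mul_one]
    rw [h2] at h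
    exact (ENNReal.mul_le_mul_iff_right (hhalf0 j) (hhalffin j)).mp h
  have hSCb : ∀ j, m (SC j) ≤ (2⁻¹:ℝ≥0∞)^j := fun j => hmain j _ (hauxC j).2
  have hSDb : ∀ j, m (SD j) ≤ (2⁻¹:ℝ≥0∞)^j := fun j => hmain j _ (hauxD j).2
  -- Borel--Cantelli
  have hBC : ∀ (S : ℕ → Set G), (∀ j, m (S j) ≤ (2⁻¹:ℝ≥0∞)^j) →
      m (⋂ n, ⋃ j, ⋃ (_ : n ≤ j), S j) = 0 := by
    intro S hS
    have htsum : ∑' j, m (S j) ≠ ⊤ := by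
      refine ne_top_of_le_ne_top ?_ (ENNReal.tsum_le_tsum hS)
      rw [ENNReal.tsum_geometric, ENNReal.one_sub_inv_two]
      simp
    have htail := ENNReal.tendsto_sum_nat_add (fun j => m (S j)) htsum
    have hle : ∀ n, m (⋂ n, ⋃ j, ⋃ (_ : n ≤ j), S j) ≤ ∑' k, m (S (k + n)) := by
      intro n
      refine le_trans (measure_mono ?_) (measure_iUnion_le fun k => S (k + n))
      refine (Set.iInter_subset _ n).trans ?_
      rintro x hx
      simp only [Set.mem_iUnion] at hx ⊢
      obtain ⟨j, hj, hxj⟩ := hx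
      exact ⟨j - n, by rwa [Nat.sub_add_cancel hj]⟩
    have := ge_of_tendsto' htail (fun n => hle n)
    exact le_antisymm this zero_le
  set C1 : Set G := C₀ \ (⋂ n, ⋃ j, ⋃ (_ : n ≤ j), SC j) with hC1def
  set D1 : Set G := D₀ \ (⋂ n, ⋃ j, ⋃ (_ : n ≤ j), SD j) with hD1def
  have hC1m : MeasurableSet C1 := hC₀.diff
    (MeasurableSet.iInter fun n => MeasurableSet.iUnion fun j =>
      MeasurableSet.iUnion fun _ => hSCm j)
  have hD1m : MeasurableSet D1 := hD₀.diff
    (MeasurableSet.iInter fun n => MeasurableSet.iUnion fun j =>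
      MeasurableSet.iUnion fun _ => hSDm j)
  have hC1meq : m C1 = m C₀ := measure_diff_null (hBC SC hSCb)
  have hD1meq : m D1 = m D₀ := measure_diff_null (hBC SD hSDb)
  -- good points
  have hC1good : ∀ c ∈ C1, ∃ n, ∀ j, n ≤ j → hCfun j c < m (V j) / 2 := by
    rintro c ⟨hcC₀, hc⟩
    simp only [Set.mem_iInter, Set.mem_iUnion, not_forall, not_exists] at hc
    obtain ⟨n, hn⟩ := hc
    exact ⟨n, fun j hj => not_le.mp (fun hcon => hn j hj ⟨hcC₀, hcon⟩)⟩
  have hD1good : ∀ d ∈ D1, ∃ n, ∀ j, n ≤ j → hDfun j d < m (V j) / 2 := by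
    rintro d ⟨hdD₀, hd⟩
    simp only [Set.mem_iInter, Set.mem_iUnion, not_forall, not_exists] at hd
    obtain ⟨n, hn⟩ := hd
    exact ⟨n, fun j hj => not_le.mp (fun hcon => hn j hj ⟨hdD₀, hcon⟩)⟩
  -- the key pointwise positivity
  have hkey : ∀ c ∈ C1, ∀ d ∈ D1, 0 < ∫ t, f t * g (c + d - t) ∂m := by
    intro c hc d hd
    obtain ⟨n1, hn1⟩ := hC1good c hc
    obtain ⟨n2, hn2⟩ := hD1good d hd
    set j := max n1 n2
    have h1 : hCfun j c < m (V j) / 2 := hn1 j (le_max_left _ _)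
    have h2 : hDfun j d < m (V j) / 2 := hn2 j (le_max_right _ _)
    refine aux_pos m hf hg hf01 hg01 ?_
    set E : Set G := {v | 0 < f (c + v) ∧ 0 < g (d - v)} with hEdef
    have hcover : V j ⊆ {v | v ∈ V j ∧ c + v ∉ C₀} ∪ ({v | v ∈ V j ∧ d - v ∉ D₀} ∪ E) := by
      intro v hv
      by_cases h3 : c + v ∈ C₀
      · by_cases h4 : d - v ∈ D₀
        · exact Or.inr (Or.inr ⟨h3, h4⟩)
        · exact Or.inr (Or.inl ⟨hv, h4⟩)
      · exact Or.inl ⟨hv, h3⟩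
    by_contra hcon
    push_neg at hcon
    have hE0 : m E = 0 := le_antisymm hcon zero_le
    have : m (V j) ≤ hCfun j c + (hDfun j d + m E) :=
      (measure_mono hcover).trans ((measure_union_le _ _).trans
        (add_le_add le_rfl (measure_union_le _ _)))
    rw [hE0, add_zero] at this
    have hlt : hCfun j c + hDfun j d < m (V j) / 2 + m (V j) / 2 :=
      ENNReal.add_lt_add h1 h2
    rw [ENNReal.add_halves] at hlt
    exact absurd (this.trans_lt hlt) (lt_irrefl _)
  -- sigma-compact refinement
  obtain ⟨K, hKc, hKsub, hKm⟩ := aux_sigma m hC1m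
  obtain ⟨L, hLc, hLsub, hLm⟩ := aux_sigma m hD1m
  refine ⟨⋃ n, K n, ⋃ n, L n, ?_, ?_, ?_, ?_, ?_, ?_, ?_, ?_⟩
  · exact MeasurableSet.iUnion fun n => (hKc n).isClosed.measurableSet
  · exact MeasurableSet.iUnion fun n => (hLc n).isClosed.measurableSet
  · exact Set.iUnion_subset fun n => (hKsub n).trans Set.diff_subset
  · exact Set.iUnion_subset fun n => (hLsub n).trans Set.diff_subset
  · rw [hKm, hC1meq]
  · rw [hLm, hD1meq]
  · have heq : (⋃ n, K n) + (⋃ n, L n) = ⋃ n, ⋃ k, (K n + L k) := by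
      rw [Set.iUnion_add]
      exact Set.iUnion_congr fun n => Set.add_iUnion _ _
    rw [heq]
    exact MeasurableSet.iUnion fun n => MeasurableSet.iUnion fun k =>
      ((hKc n).add (hLc k)).isClosed.measurableSet
  · rw [Set.add_subset_iff]
    intro x hx y hy
    simp only [Set.mem_iUnion] at hx hy
    obtain ⟨n, hn⟩ := hx
    obtain ⟨k, hk⟩ := hy
    exact hkey x (hKsub n hn) y (hLsub k hk)
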